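/- Let a locally compact abelian group G act via a continuous action α on a complete Hausdorff uniform space (X, 𝒰) such that 𝒰 is G-invariant. Then for x ∈ X the following are equivalent: (i) x is Bohr-type almost periodic (for every U ∈ 𝒰 the set P_U(x) = {t ∈ G : (α(t,x), x) ∈ U} is relatively dense); (ii) x is Bochner-type almost periodic (the orbit closure H_x = closure of {α(t,x) : t ∈ G} is compact); (iii) x is pseudo Bochner-type almost periodic (for every U ∈ 𝒰 the set P_U(x) is finitely relatively dense). -/

import Mathlib

open Uniformity Pointwise

/-- **Main result I.** Let a locally compact abelian group `G` act continuously
via `α` on a complete Hausdorff uniform space `(X, 𝒰)` with `𝒰` `G`-invariant. Then for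
`x ∈ X`, Bohr-type, Bochner-type and pseudo Bochner-type almost periodicity are equivalent. -/
theorem stmt7 {G X : Type*}
    [AddCommGroup G] [TopologicalSpace G] [IsTopologicalAddGroup G]
    [LocallyCompactSpace G] [T2Space G]
    [UniformSpace X] [T2Space X] [CompleteSpace X]
    (α : G → X → X)
    (hzero : ∀ x, α 0 x = x)
    (hadd : ∀ s t x, α s (α t x) = α (s + t) x)
    (hcont : Continuous fun p : G × X => α p.1 p.2)
    (hinv : ∀ U ∈ 𝓤 X, ∃ U' ∈ 𝓤 X, ∀ (t : G), ∀ p : X × X, p ∈ U' →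
      (α t p.1, α t p.2) ∈ U)
    (x : X) :
    List.TFAE
      [ -- (i) Bohr-type almost periodic
        ∀ U ∈ 𝓤 X, ∃ K : Set G, IsCompact K ∧ {t : G | (α t x, x) ∈ U} + K = Set.univ,
        -- (ii) Bochner-type almost periodic
        IsCompact (closure (Set.range fun t : G => α t x)),
        -- (iii) pseudo Bochner-type almost periodic
        ∀ U ∈ 𝓤 X, ∃ F : Set G, F.Finite ∧ {t : G | (α t x, x) ∈ U} + F = Set.univ ] := by

  have horb : Continuous fun k : G => α k x :=
    hcont.comp (continuous_id.prodMk continuous_const)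
  tfae_have 1 → 2
  · intro h1
    rw [isCompact_iff_totallyBounded_isComplete]
    refine ⟨TotallyBounded.closure ?_, isClosed_closure.isComplete⟩
    intro V hV
    obtain ⟨W, hW, hWV⟩ := comp_mem_uniformity_sets hV
    obtain ⟨U', hU', hU'inv⟩ := hinv W hW
    obtain ⟨K, hK, hPK⟩ := h1 U' hU'
    have hC : IsCompact ((fun k => α k x) '' K) := hK.image horb
    obtain ⟨T, hTfin, hTcov⟩ := hC.totallyBounded W hW
    refine ⟨T, hTfin, ?_⟩
    rintro z ⟨t, rfl⟩
    have ht : t ∈ {s : G | (α s x, x) ∈ U'} + K := hPK ▸ Set.mem_univ t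
    obtain ⟨p, hp, k, hk, hpk⟩ := ht
    have hpk' : p + k = t := hpk
    have h1' : (α k (α p x), α k x) ∈ W := hU'inv k (α p x, x) hp
    rw [hadd, add_comm k p, hpk'] at h1'
    have h2' : α k x ∈ (fun k => α k x) '' K := ⟨k, hk, rfl⟩
    obtain ⟨y, hyT, hy⟩ := Set.mem_iUnion₂.mp (hTcov h2')
    exact Set.mem_iUnion₂.mpr ⟨y, hyT, hWV ⟨α k x, h1', hy⟩⟩
  tfae_have 2 → 3
  · intro h2 U hU
    obtain ⟨U', hU', hU'inv⟩ := hinv U hU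
    have htb : TotallyBounded (Set.range fun t : G => α t x) :=
      h2.totallyBounded.subset subset_closure
    rw [totallyBounded_iff_subset] at htb
    obtain ⟨T, hTsub, hTfin, hTcov⟩ := htb U' hU'
    have hch : ∀ y : X, ∃ s : G, y ∈ T → α s x = y := by
      intro y
      by_cases hy : y ∈ T
      · obtain ⟨s, hs⟩ := hTsub hy
        exact ⟨s, fun _ => hs⟩
      · exact ⟨0, fun h => absurd h hy⟩
    choose g hg using hch
    refine ⟨g '' T, hTfin.image g, Set.eq_univ_of_forall fun t => ?_⟩
    obtain ⟨y, hyT, hy⟩ := Set.mem_iUnion₂.mp (hTcov ⟨t, rfl⟩)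
    have hxy : α (g y) x = y := hg y hyT
    have h1' : (α (-(g y)) (α t x), α (-(g y)) y) ∈ U :=
      hU'inv (-(g y)) (α t x, y) hy
    have h2' : α (-(g y)) y = x := by
      calc α (-(g y)) y = α (-(g y)) (α (g y) x) := by rw [hxy]
        _ = x := by rw [hadd, neg_add_cancel, hzero]
    rw [hadd, h2'] at h1'
    refine ⟨-(g y) + t, h1', g y, ⟨y, hyT, rfl⟩, neg_add_cancel_comm _ _⟩
  tfae_have 3 → 1
  · intro h3 U hU
    obtain ⟨F, hFfin, hF⟩ := h3 U hU
    exact ⟨F, hFfin.isCompact, hF⟩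
  tfae_finish
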